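/- The cycle C_n (n ≥ 3) can be partitioned into two total dominating sets if and only if n is divisible by 4. -/

import Mathlib

/-- `S` is a total dominating set of `G`. -/
def totalDom {V : Type*} (G : SimpleGraph V) (S : Set V) : Prop :=
  ∀ v : V, ∃ u ∈ S, G.Adj v u

open scoped Fin.NatCast Fin.CommRing in
/-- `C_n` (`n ≥ 3`) can be partitioned into two total dominating sets iff `4 ∣ n`. -/
theorem stmt2 (n : ℕ) (hn : 3 ≤ n) :
    (∃ A B : Set (Fin n), Disjoint A B ∧ A ∪ B = Set.univ ∧
      totalDom (SimpleGraph.cycleGraph n) A ∧ totalDom (SimpleGraph.cycleGraph n) B) ↔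
    4 ∣ n := by
  obtain ⟨m, rfl⟩ : ∃ m, n = m + 2 := ⟨n - 2, by omega⟩
  set n := m + 2 with hn2
  constructor
  · rintro ⟨A, B, hdis, huniv, hA, hB⟩
    -- membership in B is the negation of membership in A
    have hBA : ∀ v : Fin n, v ∈ B ↔ v ∉ A := by
      intro v
      constructor
      · intro hb ha
        exact hdis.ne_of_mem ha hb rfl
      · intro ha
        have hm : v ∈ A ∪ B := huniv ▸ Set.mem_univ v
        rcases hm with h | h
        · exact absurd h ha
        · exact h
    -- key step: c(v+2) = ¬ c(v)
    have step : ∀ v : Fin n, (v + 2 ∈ A ↔ v ∉ A) := by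
      intro v
      have nbr : ∀ u : Fin n, (SimpleGraph.cycleGraph n).Adj (v + 1) u → u = v ∨ u = v + 2 := by
        intro u hu
        rw [SimpleGraph.cycleGraph_adj] at hu
        rcases hu with h | h
        · left; linear_combination -h
        · right; linear_combination h
      obtain ⟨a, haA, haadj⟩ := hA (v + 1)
      obtain ⟨b, hbB, hbadj⟩ := hB (v + 1)
      rw [hBA] at hbB
      rcases nbr a haadj with rfl | rfl <;> rcases nbr b hbadj with rfl | rfl <;> tauto
    -- iterate the step
    have iter : ∀ k : ℕ, ((((2 * k : ℕ) : Fin n) : Fin n) ∈ A ↔ ((0 : Fin n) ∈ A ↔ Even k)) := by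
      intro k
      induction k with
      | zero => simp
      | succ k ih =>
        have hc : (((2 * (k + 1) : ℕ) : Fin n) : Fin n) = ((2 * k : ℕ) : Fin n) + 2 := by
          rw [show 2 * (k + 1) = 2 * k + 2 by ring, Nat.cast_add]; rfl
        rw [hc, step, ih, Nat.even_add_one]
        by_cases h : (0 : Fin n) ∈ A <;> by_cases h2 : Even k <;> simp [h, h2]
    have hcastn : ∀ k : ℕ, n ∣ k → ((k : Fin n) : Fin n) = 0 := by
      intro k hk
      obtain ⟨c, rfl⟩ := hk
      rw [Nat.cast_mul, Fin.natCast_self, zero_mul]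
    -- n is even
    have heven : Even n := by
      by_contra hodd
      have h1 := iter n
      rw [hcastn (2 * n) ⟨2, by ring⟩] at h1
      tauto
    obtain ⟨c, hc⟩ := heven
    have h2 := iter c
    rw [hcastn (2 * c) ⟨1, by omega⟩] at h2
    have : Even c := by tauto
    obtain ⟨d, hd⟩ := this
    exact ⟨d, by omega⟩
  · intro h4
    refine ⟨{v : Fin n | v.val % 4 < 2}, {v : Fin n | ¬ v.val % 4 < 2}, ?_, ?_, ?_, ?_⟩
    · rw [Set.disjoint_iff_inter_eq_empty]
      ext v; simp
    · ext v; simp; omega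
    all_goals {
      intro v
      have hadd : ((v + 1 : Fin n).val) % 4 = (v.val + 1) % 4 := by
        have h1 : (v + 1 : Fin n).val = (v.val + (1 % n)) % n := by
          rw [Fin.add_def, Fin.val_one']
        rw [h1, Nat.mod_mod_of_dvd _ h4]
        have : 1 % n = 1 := Nat.mod_eq_of_lt (by omega)
        rw [this]
      have hsub : ((v - 1 : Fin n).val) % 4 = (v.val + 3) % 4 := by
        have h1n : (1 : ℕ) % n = 1 := Nat.mod_eq_of_lt (by omega)
        have h1 : (v - 1 : Fin n).val = (n - 1 + v.val) % n := by
          rw [Fin.sub_def, Fin.val_one', h1n]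
        rw [h1, Nat.mod_mod_of_dvd _ h4]
        obtain ⟨c, hc⟩ := h4
        have hv := v.isLt
        omega
      have adj1 : (SimpleGraph.cycleGraph n).Adj v (v + 1) := by
        rw [SimpleGraph.cycleGraph_adj]; right; ring
      have adj2 : (SimpleGraph.cycleGraph n).Adj v (v - 1) := by
        rw [SimpleGraph.cycleGraph_adj]; left; ring
      have hcases : v.val % 4 = 0 ∨ v.val % 4 = 1 ∨ v.val % 4 = 2 ∨ v.val % 4 = 3 := by omega
      rcases hcases with h | h | h | h
      all_goals first
        | (exact ⟨v + 1, by simp only [Set.mem_setOf_eq, hadd]; omega, adj1⟩)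
        | (exact ⟨v - 1, by simp only [Set.mem_setOf_eq, hsub]; omega, adj2⟩)
    }
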